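/- Let ρ ∈ L¹(ℝ³) ∩ L³(ℝ³) be nonnegative and let u(x) = ∫_{ℝ³} U(x−z) e₃ ρ(z) dz where U is the Oseen tensor. Then u is log-Lipschitz: there exists C depending only on ‖ρ‖_{L¹∩L³} such that |u(x)−u(y)| ≤ C|x−y|(1 + max(0, −log|x−y|)) for all x ≠ y in ℝ³. -/

import Mathlib

open MeasureTheory
open scoped RealInnerProductSpace

/-- The Oseen tensor `U(x)`, as the linear map `v ↦ U(x) v` on `ℝ³`. -/
noncomputable def oseen (x v : EuclideanSpace ℝ (Fin 3)) : EuclideanSpace ℝ (Fin 3) :=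
  (1 / (8 * Real.pi * ‖x‖)) • (v + (⟪x, v⟫ / ‖x‖ ^ 2) • x)

/-- The third basis vector `e₃` of `ℝ³`. -/
noncomputable def e₃ : EuclideanSpace ℝ (Fin 3) := EuclideanSpace.single 2 1

/-- The velocity `u(x) = ∫ U(x−z) e₃ ρ(z) dz` generated by a density `ρ`. -/
noncomputable def oseenVel (ρ : EuclideanSpace ℝ (Fin 3) → ℝ)
    (x : EuclideanSpace ℝ (Fin 3)) : EuclideanSpace ℝ (Fin 3) :=
  ∫ z, ρ z • oseen (x - z) e₃

open Metric
open scoped ENNReal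
local notation "E3" => EuclideanSpace ℝ (Fin 3)

lemma norm_e₃ : ‖e₃‖ = 1 := by simp [e₃, EuclideanSpace.norm_single]

lemma oseen_norm_le (w : E3) : ‖oseen w e₃‖ ≤ 1 / ‖w‖ := by
  rcases eq_or_ne w 0 with rfl | hw
  · simp [oseen]
  have hw' : 0 < ‖w‖ := norm_pos_iff.2 hw
  have hpi : (0:ℝ) < Real.pi := Real.pi_pos
  have h1 : ‖(⟪w, e₃⟫ / ‖w‖ ^ 2) • w‖ ≤ 1 := by
    rw [norm_smul]
    have : |⟪w, e₃⟫| ≤ ‖w‖ := by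
      simpa [norm_e₃] using abs_real_inner_le_norm w e₃
    rw [Real.norm_eq_abs, abs_div]
    rw [div_mul_eq_mul_div, div_le_one (by positivity)]
    calc |⟪w, e₃⟫| * ‖w‖ ≤ ‖w‖ * ‖w‖ := by
          apply mul_le_mul_of_nonneg_right this (norm_nonneg _)
      _ = |‖w‖ ^ 2| := by rw [abs_of_nonneg (by positivity)]; ring
  have h2 : ‖e₃ + (⟪w, e₃⟫ / ‖w‖ ^ 2) • w‖ ≤ 2 := by
    calc ‖e₃ + (⟪w, e₃⟫ / ‖w‖ ^ 2) • w‖ ≤ ‖e₃‖ + ‖(⟪w, e₃⟫ / ‖w‖ ^ 2) • w‖ := norm_add_le _ _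
      _ ≤ 1 + 1 := by rw [norm_e₃]; linarith
      _ = 2 := by norm_num
  rw [oseen, norm_smul, Real.norm_eq_abs, abs_of_nonneg (by positivity)]
  calc 1 / (8 * Real.pi * ‖w‖) * ‖e₃ + (⟪w, e₃⟫ / ‖w‖ ^ 2) • w‖
      ≤ 1 / (8 * Real.pi * ‖w‖) * 2 := by
        apply mul_le_mul_of_nonneg_left h2 (by positivity)
    _ ≤ 1 / ‖w‖ := by
        rw [div_mul_eq_mul_div, div_le_div_iff₀ (by positivity) hw']
        have : (1:ℝ) * 2 ≤ 8 * Real.pi := by nlinarith [Real.pi_gt_three]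
        nlinarith



set_option maxHeartbeats 1000000 in
lemma oseen_arith (r r' δ a a' : ℝ) (hr : 0 < r) (hδ0 : 0 ≤ δ) (h : δ ≤ r / 2)
    (hrr' : |r - r'| ≤ δ) (ha' : |a'| ≤ r') (haa : |a - a'| ≤ δ) :
    1/(8*Real.pi) * (|1/r - 1/r'| + (|a - a'|/r^3 * r + (|a'|/r^3 * δ +
      |a'| * |1/r^3 - 1/r'^3| * r'))) ≤ δ / r^2 := by
  obtain ⟨hd1, hd2⟩ := abs_le.1 hrr'
  have hr'1 : r / 2 ≤ r' := by linarith
  have hr'2 : r' ≤ 3 * r / 2 := by linarith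
  have hr' : 0 < r' := by linarith
  have hr2 : (0:ℝ) < r^2 := pow_pos hr 2
  have hr3 : (0:ℝ) < r^3 := pow_pos hr 3
  have hr'3 : (0:ℝ) < r'^3 := pow_pos hr' 3
  have hrr'pos : (0:ℝ) < r * r' := mul_pos hr hr'
  have habs : |r' - r| ≤ δ := by rw [abs_sub_comm]; exact hrr'
  -- T1
  have hT1 : |1/r - 1/r'| ≤ 2 * δ / r^2 := by
    have e1 : 1/r - 1/r' = (r' - r)/(r*r') := by field_simp
    rw [e1, abs_div, abs_of_pos hrr'pos, div_le_div_iff₀ hrr'pos hr2]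
    calc |r' - r| * r^2 ≤ δ * r^2 := mul_le_mul_of_nonneg_right habs hr2.le
      _ = (δ * r) * r := by ring
      _ ≤ (δ * r) * (2 * r') := by
          apply mul_le_mul_of_nonneg_left (by linarith) (mul_nonneg hδ0 hr.le)
      _ = 2 * δ * (r * r') := by ring
  -- T2a
  have hT2a : |a - a'|/r^3 * r ≤ δ / r^2 := by
    rw [div_mul_eq_mul_div, div_le_div_iff₀ hr3 hr2]
    calc |a - a'| * r * r^2 ≤ δ * r * r^2 :=
          mul_le_mul_of_nonneg_right (mul_le_mul_of_nonneg_right haa hr.le) hr2.le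
      _ = δ * r^3 := by ring
  -- T2b
  have hT2b : |a'|/r^3 * δ ≤ (3/2) * δ / r^2 := by
    rw [div_mul_eq_mul_div, div_le_div_iff₀ hr3 hr2]
    calc |a'| * δ * r^2 ≤ (3/2*r) * δ * r^2 := by
          apply mul_le_mul_of_nonneg_right
            (mul_le_mul_of_nonneg_right (by linarith) hδ0) hr2.le
      _ = 3/2 * δ * r^3 := by ring
  -- T2c
  have hD : (0:ℝ) < r^3 * r'^3 := mul_pos hr3 hr'3
  have hpos3 : (0:ℝ) < r'^2 + r'*r + r^2 := by nlinarith
  have h13 : |1/r^3 - 1/r'^3| ≤ δ * (r^2 + r*r' + r'^2) / (r^3 * r'^3) := by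
    have e2 : 1/r^3 - 1/r'^3 = ((r' - r) * (r'^2 + r'*r + r^2)) / (r^3 * r'^3) := by
      field_simp; ring
    rw [e2, abs_div, abs_of_pos hD, abs_mul, abs_of_pos hpos3,
      div_le_div_iff₀ hD hD]
    have : |r' - r| * (r'^2 + r'*r + r^2) ≤ δ * (r^2 + r*r' + r'^2) := by
      calc |r' - r| * (r'^2 + r'*r + r^2) ≤ δ * (r'^2 + r'*r + r^2) :=
            mul_le_mul_of_nonneg_right habs hpos3.le
        _ = δ * (r^2 + r*r' + r'^2) := by ring
    exact mul_le_mul_of_nonneg_right this hD.le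
  have hT2c : |a'| * |1/r^3 - 1/r'^3| * r' ≤ (19/2) * δ / r^2 := by
    have step1 : |a'| * |1/r^3 - 1/r'^3| * r' ≤
        (r' * (δ * (r^2 + r*r' + r'^2) / (r^3 * r'^3))) * r' := by
      apply mul_le_mul_of_nonneg_right _ hr'.le
      exact mul_le_mul ha' h13 (abs_nonneg _) hr'.le
    have step2 : (r' * (δ * (r^2 + r*r' + r'^2) / (r^3 * r'^3))) * r' =
        δ * (r^2 + r*r' + r'^2) / (r^3 * r') := by
      field_simp
    rw [step2] at step1
    refine step1.trans ?_
    rw [div_le_div_iff₀ (mul_pos hr3 hr') hr2]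
    have key1 : r^2 + r*r' + r'^2 ≤ 19/4 * r^2 := by nlinarith
    have s3 : δ * (r^2 + r*r' + r'^2) * r^2 ≤ δ * (19/4 * r^2) * r^2 :=
      mul_le_mul_of_nonneg_right (mul_le_mul_of_nonneg_left key1 hδ0) hr2.le
    have s4 : r^3 * (r/2) ≤ r^3 * r' := mul_le_mul_of_nonneg_left hr'1 hr3.le
    nlinarith [mul_le_mul_of_nonneg_left s4 (by linarith : (0:ℝ) ≤ 19/2 * δ)]
  have hπ14 : (14:ℝ) ≤ 8 * Real.pi := by nlinarith [Real.pi_gt_three]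
  have hsum : |1/r - 1/r'| + (|a - a'|/r^3 * r + (|a'|/r^3 * δ +
      |a'| * |1/r^3 - 1/r'^3| * r')) ≤ 14 * δ / r^2 := by
    have e3 : 2*δ/r^2 + δ/r^2 + ((3/2)*δ/r^2 + (19/2)*δ/r^2) = 14*δ/r^2 := by ring
    linarith
  have h8π : (0:ℝ) < 8 * Real.pi := by linarith
  have hfin : 1/(8*Real.pi) * (14 * δ / r^2) ≤ δ / r^2 := by
    rw [← mul_div_assoc, div_le_div_iff₀ (by positivity) hr2]
    have h1 : 14 * (δ * r^2) ≤ 8 * Real.pi * (δ * r^2) :=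
      mul_le_mul_of_nonneg_right hπ14 (mul_nonneg hδ0 hr2.le)
    have h2 : 1 / (8 * Real.pi) * (14 * δ) * r ^ 2 * (8 * Real.pi) = 14 * (δ * r^2) := by
      field_simp
    nlinarith [h1, h2, h8π]
  calc 1/(8*Real.pi) * (|1/r - 1/r'| + (|a - a'|/r^3 * r + (|a'|/r^3 * δ +
        |a'| * |1/r^3 - 1/r'^3| * r')))
      ≤ 1/(8*Real.pi) * (14 * δ / r^2) := by
        apply mul_le_mul_of_nonneg_left hsum (by positivity)
    _ ≤ δ / r^2 := hfin

lemma oseen_diff_le (w w' : E3) (h : ‖w - w'‖ ≤ ‖w‖ / 2) :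
    ‖oseen w e₃ - oseen w' e₃‖ ≤ ‖w - w'‖ / ‖w‖ ^ 2 := by
  rcases eq_or_ne w 0 with rfl | hw
  · have h0 : ‖(0:E3) - w'‖ ≤ 0 := by simpa using h
    have : w' = 0 := by simpa [sub_eq_zero, eq_comm] using norm_le_zero_iff.1 h0
    simp [this]
  have hr : 0 < ‖w‖ := norm_pos_iff.2 hw
  have hw' : 0 < ‖w'‖ := by
    have h1 : ‖w‖ ≤ ‖w - w'‖ + ‖w'‖ := by
      calc ‖w‖ = ‖w - w' + w'‖ := by rw [sub_add_cancel]
        _ ≤ ‖w - w'‖ + ‖w'‖ := norm_add_le _ _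
    linarith
  have key : oseen w e₃ - oseen w' e₃ =
      (1/(8*Real.pi)) • ((1/‖w‖ - 1/‖w'‖) • e₃ + ((⟪w, e₃⟫ - ⟪w', e₃⟫)/‖w‖^3) • w +
        ((⟪w', e₃⟫/‖w‖^3) • (w - w') + (⟪w', e₃⟫ * (1/‖w‖^3 - 1/‖w'‖^3)) • w')) := by
    rw [oseen, oseen]
    match_scalars <;> (try field_simp [Real.pi_ne_zero, hr.ne', hw'.ne']) <;>
      (first | (left; ring) | ring)
  have hnorm : ‖oseen w e₃ - oseen w' e₃‖ ≤
      1/(8*Real.pi) * (|1/‖w‖ - 1/‖w'‖| + (|⟪w, e₃⟫ - ⟪w', e₃⟫|/‖w‖^3 * ‖w‖ +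
        (|⟪w', e₃⟫|/‖w‖^3 * ‖w - w'‖ + |⟪w', e₃⟫| * |1/‖w‖^3 - 1/‖w'‖^3| * ‖w'‖))) := by
    rw [key, norm_smul, Real.norm_eq_abs, abs_of_pos (by positivity : (0:ℝ) < 1/(8*Real.pi))]
    apply mul_le_mul_of_nonneg_left _ (by positivity : (0:ℝ) ≤ 1/(8*Real.pi))
    calc ‖(1/‖w‖ - 1/‖w'‖) • e₃ + ((⟪w, e₃⟫ - ⟪w', e₃⟫)/‖w‖^3) • w +
        ((⟪w', e₃⟫/‖w‖^3) • (w - w') + (⟪w', e₃⟫ * (1/‖w‖^3 - 1/‖w'‖^3)) • w')‖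
        ≤ ‖(1/‖w‖ - 1/‖w'‖) • e₃‖ + ‖((⟪w, e₃⟫ - ⟪w', e₃⟫)/‖w‖^3) • w‖ +
          (‖(⟪w', e₃⟫/‖w‖^3) • (w - w')‖ + ‖(⟪w', e₃⟫ * (1/‖w‖^3 - 1/‖w'‖^3)) • w'‖) := by
          refine (norm_add_le _ _).trans ?_
          gcongr
          · exact norm_add_le _ _
          · exact norm_add_le _ _
        _ = |1/‖w‖ - 1/‖w'‖| + (|⟪w, e₃⟫ - ⟪w', e₃⟫|/‖w‖^3 * ‖w‖ +
            (|⟪w', e₃⟫|/‖w‖^3 * ‖w - w'‖ + |⟪w', e₃⟫| * |1/‖w‖^3 - 1/‖w'‖^3| * ‖w'‖)) := by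
          rw [norm_smul, norm_smul, norm_smul, norm_smul, norm_e₃, mul_one]
          simp only [Real.norm_eq_abs, abs_div, abs_mul,
            abs_of_pos (pow_pos hr 3)]
          ring
  have hrr' : |‖w‖ - ‖w'‖| ≤ ‖w - w'‖ := abs_norm_sub_norm_le w w'
  have ha' : |⟪w', e₃⟫| ≤ ‖w'‖ := by
    simpa [norm_e₃] using abs_real_inner_le_norm w' e₃
  have haa : |⟪w, e₃⟫ - ⟪w', e₃⟫| ≤ ‖w - w'‖ := by
    have h1 : ⟪w, e₃⟫ - ⟪w', e₃⟫ = ⟪w - w', e₃⟫ := (inner_sub_left _ _ _).symm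
    rw [h1]
    simpa [norm_e₃] using abs_real_inner_le_norm (w - w') e₃
  exact hnorm.trans (oseen_arith ‖w‖ ‖w'‖ ‖w - w'‖ ⟪w, e₃⟫ ⟪w', e₃⟫ hr
    (norm_nonneg _) h hrr' ha' haa)

/-- volume of the unit ball of `ℝ³`. -/
noncomputable def B3 : ℝ := (volume (ball (0 : E3) 1)).toReal

lemma B3_nonneg : 0 ≤ B3 := ENNReal.toReal_nonneg

lemma volume_ball_eq (a : E3) {c : ℝ} (hc : 0 ≤ c) :
    volume (ball a c) = ENNReal.ofReal (c ^ 3 * B3) := by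
  rw [Measure.addHaar_ball volume a hc, B3,
    ENNReal.ofReal_mul (pow_nonneg hc 3),
    ENNReal.ofReal_toReal measure_ball_lt_top.ne]
  norm_num [finrank_euclideanSpace_fin]

lemma volume_ball_rpow (a : E3) {c : ℝ} (hc : 0 ≤ c) :
    (volume (ball a c)) ^ ((2:ℝ)/3) = ENNReal.ofReal (B3 ^ ((2:ℝ)/3) * c ^ 2) := by
  rw [volume_ball_eq a hc, ENNReal.ofReal_rpow_of_nonneg
    (mul_nonneg (pow_nonneg hc 3) B3_nonneg) (by norm_num)]
  congr 1
  rw [Real.mul_rpow (pow_nonneg hc 3) B3_nonneg, mul_comm]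
  congr 1
  rw [← Real.rpow_natCast c 3, ← Real.rpow_mul hc,
    show ((3:ℕ):ℝ) * ((2:ℝ)/3) = ((2:ℕ):ℝ) by norm_num, Real.rpow_natCast]

/-- Hölder: set integral of a nonneg `L³` function against the volume of the set. -/
lemma setLIntegral_le_of_L3 (ρ : E3 → ℝ) (hm : AEMeasurable ρ volume)
    (hnn : ∀ z, 0 ≤ ρ z) {R : ℝ}
    (hρ3 : eLpNorm ρ 3 volume ≤ ENNReal.ofReal R) (s : Set E3) :
    ∫⁻ z in s, ENNReal.ofReal (ρ z) ≤ ENNReal.ofReal R * (volume s) ^ ((2:ℝ)/3) := by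
  have hconj : (3:ℝ).HolderConjugate (3/2) := Real.holderConjugate_iff.mpr ⟨by norm_num, by norm_num⟩
  have hP : AEMeasurable (fun z => ENNReal.ofReal (ρ z)) (volume.restrict s) :=
    ENNReal.measurable_ofReal.comp_aemeasurable hm.restrict
  have h := ENNReal.lintegral_mul_le_Lp_mul_Lq (volume.restrict s) hconj hP
    (aemeasurable_const (b := (1:ℝ≥0∞)))
  simp only [Pi.mul_apply, mul_one, ENNReal.one_rpow, lintegral_const, one_mul,
    Measure.restrict_apply_univ] at h
  refine h.trans ?_
  rw [show (1:ℝ)/(3/2) = (2:ℝ)/3 by norm_num]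
  refine mul_le_mul_left ?_ _
  have h1 : ∫⁻ z in s, (ENNReal.ofReal (ρ z)) ^ (3:ℝ) ∂volume ≤
      ∫⁻ z, (ENNReal.ofReal (ρ z)) ^ (3:ℝ) ∂volume := setLIntegral_le_lintegral _ _
  have h2 : (∫⁻ z, (ENNReal.ofReal (ρ z)) ^ (3:ℝ) ∂volume) ^ ((1:ℝ)/3) =
      eLpNorm ρ 3 volume := by
    rw [eLpNorm_eq_lintegral_rpow_enorm_toReal (by norm_num) (by norm_num)]
    simp only [ENNReal.toReal_ofNat]
    congr 1
    exact lintegral_congr fun z => by rw [Real.enorm_eq_ofReal (hnn z)]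
  calc (∫⁻ z in s, (ENNReal.ofReal (ρ z)) ^ (3:ℝ) ∂volume) ^ ((1:ℝ)/3)
      ≤ (∫⁻ z, (ENNReal.ofReal (ρ z)) ^ (3:ℝ) ∂volume) ^ ((1:ℝ)/3) :=
        ENNReal.rpow_le_rpow h1 (by norm_num)
    _ = eLpNorm ρ 3 volume := h2
    _ ≤ ENNReal.ofReal R := hρ3

/-- bound a set lintegral of `ρ · g` with `g ≤ m` on the (measurable) set. -/
lemma piece_bound (ρ : E3 → ℝ) (hm : AEMeasurable ρ volume)
    (hnn : ∀ z, 0 ≤ ρ z) {R : ℝ}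
    (hρ3 : eLpNorm ρ 3 volume ≤ ENNReal.ofReal R) {s : Set E3}
    (hs : MeasurableSet s) (g : E3 → ℝ) {m : ℝ}
    (hg : ∀ z ∈ s, g z ≤ m) :
    ∫⁻ z in s, ENNReal.ofReal (ρ z) * ENNReal.ofReal (g z) ≤
      ENNReal.ofReal m * (ENNReal.ofReal R * (volume s) ^ ((2:ℝ)/3)) := by
  have step1 : ∫⁻ z in s, ENNReal.ofReal (ρ z) * ENNReal.ofReal (g z) ≤
      ∫⁻ z in s, ENNReal.ofReal m * ENNReal.ofReal (ρ z) := by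
    refine lintegral_mono_ae ((ae_restrict_mem hs).mono fun z hz => ?_)
    rw [mul_comm]
    exact mul_le_mul_left (ENNReal.ofReal_le_ofReal (hg z hz)) _
  refine step1.trans ?_
  rw [lintegral_const_mul' _ _ ENNReal.ofReal_ne_top]
  exact mul_le_mul_right (setLIntegral_le_of_L3 ρ hm hnn hρ3 s) _

open scoped Classical in
/-- near-field estimate: `∫_{B(a,c)} ρ(z)/|a-z| ≤ 4 R B3^(2/3) c`. -/
lemma near_field (ρ : E3 → ℝ) (hm : AEMeasurable ρ volume)
    (hnn : ∀ z, 0 ≤ ρ z) {R : ℝ} (hR : 0 ≤ R)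
    (hρ3 : eLpNorm ρ 3 volume ≤ ENNReal.ofReal R) (a : E3) {c : ℝ} (hc : 0 < c) :
    ∫⁻ z in ball a c, ENNReal.ofReal (ρ z) * ENNReal.ofReal (1/‖a - z‖) ≤
      ENNReal.ofReal (4 * R * B3 ^ ((2:ℝ)/3) * c) := by
  set S : ℕ → Set E3 := fun k => ball a (c * (1/2)^k) \ ball a (c * (1/2)^(k+1)) with hS
  have hcover : ball a c ⊆ {a} ∪ ⋃ k, S k := by
    intro z hz
    rcases eq_or_ne z a with rfl | hza
    · exact Or.inl rfl
    right
    have ht0 : 0 < dist z a := dist_pos.2 hza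
    have htc : dist z a < c := mem_ball.1 hz
    have hex : ∃ k : ℕ, c * (1/2:ℝ)^(k+1) ≤ dist z a := by
      obtain ⟨n, hn⟩ := exists_pow_lt_of_lt_one (div_pos ht0 hc) (by norm_num : (1/2:ℝ) < 1)
      refine ⟨n, ?_⟩
      have h1 : (1/2:ℝ)^n * c < dist z a := (lt_div_iff₀ hc).1 hn
      have h2 : (1/2:ℝ)^(n+1) = (1/2)^n * (1/2) := pow_succ _ _
      nlinarith [pow_pos (show (0:ℝ) < 1/2 by norm_num) n]
    set k₀ := Nat.find hex with hk₀
    have hlow : c * (1/2:ℝ)^(k₀+1) ≤ dist z a := Nat.find_spec hex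
    have hup : dist z a < c * (1/2:ℝ)^k₀ := by
      rcases Nat.eq_zero_or_pos k₀ with h0 | hpos
      · rw [h0]; simpa using htc
      · have := Nat.find_min hex (m := k₀ - 1) (by omega)
        push_neg at this
        rwa [Nat.sub_add_cancel hpos] at this
    exact Set.mem_iUnion.2 ⟨k₀, ⟨mem_ball.2 hup, fun hmem => absurd (mem_ball.1 hmem) (not_lt.2 hlow)⟩⟩
  have hsplit : ∫⁻ z in ball a c, ENNReal.ofReal (ρ z) * ENNReal.ofReal (1/‖a - z‖) ≤
      ∑' k, ∫⁻ z in S k, ENNReal.ofReal (ρ z) * ENNReal.ofReal (1/‖a - z‖) := by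
    refine (lintegral_mono_set hcover).trans ?_
    refine (lintegral_union_le _ _ _).trans ?_
    rw [setLIntegral_measure_zero _ _ (measure_singleton a), zero_add]
    exact lintegral_iUnion_le _ _
  refine hsplit.trans ?_
  have hper : ∀ k : ℕ, ∫⁻ z in S k, ENNReal.ofReal (ρ z) * ENNReal.ofReal (1/‖a - z‖) ≤
      ENNReal.ofReal (2 * R * B3 ^ ((2:ℝ)/3) * c * (1/2)^k) := by
    intro k
    have hq : (0:ℝ) < (1/2:ℝ)^k := by positivity
    have hq1 : (0:ℝ) < (1/2:ℝ)^(k+1) := by positivity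
    have hSmeas : MeasurableSet (S k) := measurableSet_ball.diff measurableSet_ball
    have hgb : ∀ z ∈ S k, (1:ℝ)/‖a - z‖ ≤ 1/(c * (1/2)^(k+1)) := by
      intro z hz
      have h1 : c * (1/2:ℝ)^(k+1) ≤ dist z a := not_lt.1 (fun h => hz.2 (mem_ball.2 h))
      have h2 : ‖a - z‖ = dist z a := by rw [dist_eq_norm, norm_sub_rev]
      rw [h2]
      exact one_div_le_one_div_of_le (by positivity) h1
    have := piece_bound ρ hm hnn hρ3 hSmeas (fun z => 1/‖a - z‖) hgb
    refine this.trans ?_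
    have hvol : (volume (S k)) ^ ((2:ℝ)/3) ≤
        ENNReal.ofReal (B3 ^ ((2:ℝ)/3) * (c * (1/2)^k) ^ 2) := by
      rw [← volume_ball_rpow a (mul_pos hc hq).le]
      exact ENNReal.rpow_le_rpow (measure_mono Set.diff_subset) (by norm_num)
    calc ENNReal.ofReal (1/(c * (1/2)^(k+1))) * (ENNReal.ofReal R * (volume (S k)) ^ ((2:ℝ)/3))
        ≤ ENNReal.ofReal (1/(c * (1/2)^(k+1))) * (ENNReal.ofReal R *
            ENNReal.ofReal (B3 ^ ((2:ℝ)/3) * (c * (1/2)^k) ^ 2)) := by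
          exact mul_le_mul_right (mul_le_mul_right hvol _) _
      _ = ENNReal.ofReal (2 * R * B3 ^ ((2:ℝ)/3) * c * (1/2)^k) := by
          rw [← ENNReal.ofReal_mul hR,
            ← ENNReal.ofReal_mul (le_of_lt (one_div_pos.2 (mul_pos hc hq1)))]
          · congr 1
            field_simp
            ring
  refine (ENNReal.tsum_le_tsum hper).trans ?_
  have hsummable : Summable (fun k : ℕ => 2 * R * B3 ^ ((2:ℝ)/3) * c * (1/2:ℝ)^k) :=
    (summable_geometric_of_lt_one (by norm_num) (by norm_num)).mul_left _
  rw [← ENNReal.ofReal_tsum_of_nonneg (fun k => by have hB := B3_nonneg; have hR' := hR; positivity) hsummable,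
    tsum_mul_left, tsum_geometric_of_lt_one (by norm_num) (by norm_num)]
  apply ENNReal.ofReal_le_ofReal
  have : (1 - 1/2:ℝ)⁻¹ = 2 := by norm_num
  rw [this]
  nlinarith [B3_nonneg, Real.rpow_nonneg B3_nonneg ((2:ℝ)/3)]

open scoped Classical in
/-- far-field estimate. -/
lemma far_field (ρ : E3 → ℝ) (hm : AEMeasurable ρ volume)
    (hnn : ∀ z, 0 ≤ ρ z) {R : ℝ} (hR : 0 ≤ R)
    (hρ3 : eLpNorm ρ 3 volume ≤ ENNReal.ofReal R)
    (hρ1 : ∫⁻ z, ENNReal.ofReal (ρ z) ≤ ENNReal.ofReal R)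
    (x : E3) {d : ℝ} (hd : 0 < d) :
    ∫⁻ z in (ball x (2*d))ᶜ, ENNReal.ofReal (ρ z) * ENNReal.ofReal (d/‖x - z‖^2) ≤
      ENNReal.ofReal (R*d + (2 + (Real.log 2)⁻¹) * (1 + max 0 (-Real.log d)) *
        (4*R*B3^((2:ℝ)/3)*d)) := by
  have hB := B3_nonneg
  have hB' : (0:ℝ) ≤ B3 ^ ((2:ℝ)/3) := Real.rpow_nonneg hB _
  set L := max 0 (-Real.log d) with hL
  have hL0 : (0:ℝ) ≤ L := le_max_left _ _
  have hlog2 : (0:ℝ) < Real.log 2 := Real.log_pos (by norm_num)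
  set K : ℕ := ⌈Real.log (1/(2*d)) / Real.log 2⌉₊ + 1 with hK
  have hK1 : 1 ≤ K := Nat.le_add_left _ _
  -- 1 ≤ 2d·2^K
  have h2K : (1:ℝ) ≤ 2*d*2^K := by
    by_cases h1 : 1 ≤ 2*d
    · have : (1:ℝ) ≤ 2^K := one_le_pow₀ (by norm_num)
      nlinarith
    · push_neg at h1
      have h2d : (0:ℝ) < 2*d := by linarith
      have hgt : (1:ℝ) < 1/(2*d) := by rw [lt_div_iff₀ h2d]; linarith
      have hu : 0 < Real.log (1/(2*d)) := Real.log_pos hgt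
      have hKu : Real.log (1/(2*d)) / Real.log 2 ≤ (K:ℝ) := by
        refine (Nat.le_ceil _).trans ?_
        rw [hK]; push_cast; linarith
      have hKlog : Real.log (1/(2*d)) ≤ (K:ℝ) * Real.log 2 := by
        rw [div_le_iff₀ hlog2] at hKu; linarith
      have hexp : (1:ℝ)/(2*d) ≤ 2^K := by
        calc (1:ℝ)/(2*d) = Real.exp (Real.log (1/(2*d))) :=
              (Real.exp_log (by positivity)).symm
          _ ≤ Real.exp ((K:ℝ) * Real.log 2) := Real.exp_le_exp.2 hKlog
          _ = 2^K := by rw [Real.exp_nat_mul, Real.exp_log two_pos]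
      rw [div_le_iff₀ h2d] at hexp
      linarith [hexp]
  -- K ≤ (2 + 1/log 2)(1 + L)
  have hKle : (K:ℝ) ≤ (2 + (Real.log 2)⁻¹) * (1 + L) := by
    have hs : (0:ℝ) < (Real.log 2)⁻¹ := by positivity
    by_cases h1 : Real.log (1/(2*d)) / Real.log 2 ≤ 0
    · have : ⌈Real.log (1/(2*d)) / Real.log 2⌉₊ = 0 := Nat.ceil_eq_zero.2 h1
      rw [hK, this]
      push_cast
      nlinarith
    · push_neg at h1
      have hceil : (⌈Real.log (1/(2*d)) / Real.log 2⌉₊:ℝ) <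
          Real.log (1/(2*d)) / Real.log 2 + 1 := Nat.ceil_lt_add_one h1.le
      have hlogd : Real.log (1/(2*d)) = -Real.log 2 - Real.log d := by
        rw [one_div, Real.log_inv, Real.log_mul (by norm_num) hd.ne']
        ring
      have hlogpos : 0 < Real.log (1/(2*d)) := by
        have := (div_pos_iff.1 h1)
        rcases this with ⟨h, _⟩ | ⟨_, h⟩
        · exact h
        · linarith
      have hLd : Real.log (1/(2*d)) ≤ L := by
        rw [hlogd]
        have h2 : -Real.log d ≥ 0 := by rw [hlogd] at hlogpos; linarith
        have : -Real.log d ≤ L := le_max_right _ _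
        linarith
      have hu : Real.log (1/(2*d)) / Real.log 2 ≤ L * (Real.log 2)⁻¹ := by
        rw [div_eq_mul_inv]
        exact mul_le_mul_of_nonneg_right hLd hs.le
      rw [hK]
      push_cast
      nlinarith
  -- splitting
  have hsub : (ball x (2*d))ᶜ ⊆ (ball x 1)ᶜ ∪ (ball x 1 \ ball x (2*d)) := by
    intro z hz
    by_cases h1 : z ∈ ball x 1
    · exact Or.inr ⟨h1, hz⟩
    · exact Or.inl h1
  refine (lintegral_mono_set hsub).trans ?_
  refine (lintegral_union_le _ _ _).trans ?_
  -- piece 1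
  have hpiece1 : ∫⁻ z in (ball x 1)ᶜ, ENNReal.ofReal (ρ z) * ENNReal.ofReal (d/‖x - z‖^2) ≤
      ENNReal.ofReal (R*d) := by
    have hptw : ∫⁻ z in (ball x 1)ᶜ, ENNReal.ofReal (ρ z) * ENNReal.ofReal (d/‖x - z‖^2) ≤
        ∫⁻ z in (ball x 1)ᶜ, ENNReal.ofReal d * ENNReal.ofReal (ρ z) := by
      refine lintegral_mono_ae ((ae_restrict_mem measurableSet_ball.compl).mono
        fun z hz => ?_)
      rw [mul_comm]
      refine mul_le_mul_left (ENNReal.ofReal_le_ofReal ?_) _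
      have h1 : (1:ℝ) ≤ dist z x := not_lt.1 fun h => hz (mem_ball.2 h)
      have h2 : (1:ℝ) ≤ ‖x - z‖ := by
        rw [show ‖x - z‖ = dist z x by rw [norm_sub_rev, ← dist_eq_norm]]; exact h1
      calc d/‖x - z‖^2 ≤ d/1^2 :=
            div_le_div_of_nonneg_left hd.le (by norm_num) (by nlinarith)
        _ = d := by norm_num
    refine hptw.trans ?_
    rw [lintegral_const_mul' _ _ ENNReal.ofReal_ne_top]
    calc ENNReal.ofReal d * ∫⁻ z in (ball x 1)ᶜ, ENNReal.ofReal (ρ z)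
        ≤ ENNReal.ofReal d * ENNReal.ofReal R := by
          exact mul_le_mul_right ((setLIntegral_le_lintegral _ _).trans hρ1) _
      _ = ENNReal.ofReal (R*d) := by
          rw [← ENNReal.ofReal_mul hd.le, mul_comm]
  -- piece 2 : dyadic annuli
  set T : ℕ → Set E3 := fun k =>
    if k < K then ball x (2*d*2^(k+1)) \ ball x (2*d*2^k) else ∅ with hT
  have hcover : ball x 1 \ ball x (2*d) ⊆ ⋃ k, T k := by
    intro z hz
    have hz1 : dist z x < 1 := mem_ball.1 hz.1
    have hz2 : 2*d ≤ dist z x := not_lt.1 fun h => hz.2 (mem_ball.2 h)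
    have hex : ∃ k : ℕ, dist z x < 2*d*2^(k+1) := by
      refine ⟨K, ?_⟩
      have h2 : (2:ℝ)^K ≤ 2^(K+1) := by
        apply pow_le_pow_right₀ (by norm_num) (Nat.le_succ K)
      nlinarith
    set k₀ := Nat.find hex with hk₀
    have hup : dist z x < 2*d*2^(k₀+1) := Nat.find_spec hex
    have hlow : 2*d*2^k₀ ≤ dist z x := by
      rcases Nat.eq_zero_or_pos k₀ with h0 | hpos
      · rw [h0]; simpa using hz2
      · have := Nat.find_min hex (m := k₀ - 1) (by omega)
        push_neg at this
        rwa [Nat.sub_add_cancel hpos] at this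
    have hk₀K : k₀ < K := by
      have hKfind : k₀ ≤ K - 1 := by
        apply Nat.find_min' hex
        have : K - 1 + 1 = K := by omega
        rw [this]
        calc dist z x < 1 := hz1
          _ ≤ 2*d*2^K := h2K
      omega
    refine Set.mem_iUnion.2 ⟨k₀, ?_⟩
    rw [hT]
    simp only [if_pos hk₀K]
    exact ⟨mem_ball.2 hup, fun hmem => absurd (mem_ball.1 hmem) (not_lt.2 hlow)⟩
  have hpiece2 : ∫⁻ z in ball x 1 \ ball x (2*d),
      ENNReal.ofReal (ρ z) * ENNReal.ofReal (d/‖x - z‖^2) ≤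
      ENNReal.ofReal ((2 + (Real.log 2)⁻¹) * (1 + L) * (4*R*B3^((2:ℝ)/3)*d)) := by
    refine (lintegral_mono_set hcover).trans ?_
    refine (lintegral_iUnion_le _ _).trans ?_
    have hper : ∀ k : ℕ, ∫⁻ z in T k, ENNReal.ofReal (ρ z) * ENNReal.ofReal (d/‖x - z‖^2) ≤
        (if k < K then ENNReal.ofReal (4*R*B3^((2:ℝ)/3)*d) else 0) := by
      intro k
      by_cases hk : k < K
      · rw [hT]
        simp only [if_pos hk]
        set A := 2*d*2^k with hA
        have hA0 : 0 < A := by positivity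
        have hmeas : MeasurableSet (ball x (2*d*2^(k+1)) \ ball x A) :=
          measurableSet_ball.diff measurableSet_ball
        have hgb : ∀ z ∈ ball x (2*d*2^(k+1)) \ ball x A, d/‖x - z‖^2 ≤ d/A^2 := by
          intro z hz
          have h1 : A ≤ dist z x := not_lt.1 fun h => hz.2 (mem_ball.2 h)
          have h2 : A ≤ ‖x - z‖ := by
            rw [show ‖x - z‖ = dist z x by rw [norm_sub_rev, ← dist_eq_norm]]; exact h1
          exact div_le_div_of_nonneg_left hd.le (by positivity) (by nlinarith)
        refine (piece_bound ρ hm hnn hρ3 hmeas _ hgb).trans ?_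
        have hvol : (volume (ball x (2*d*2^(k+1)) \ ball x A)) ^ ((2:ℝ)/3) ≤
            ENNReal.ofReal (B3 ^ ((2:ℝ)/3) * (2*d*2^(k+1)) ^ 2) := by
          rw [← volume_ball_rpow x (by positivity : (0:ℝ) ≤ 2*d*2^(k+1))]
          exact ENNReal.rpow_le_rpow (measure_mono Set.diff_subset) (by norm_num)
        calc ENNReal.ofReal (d/A^2) * (ENNReal.ofReal R * _) ≤
            ENNReal.ofReal (d/A^2) * (ENNReal.ofReal R *
              ENNReal.ofReal (B3 ^ ((2:ℝ)/3) * (2*d*2^(k+1)) ^ 2)) :=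
              mul_le_mul_right (mul_le_mul_right hvol _) _
          _ = ENNReal.ofReal (4*R*B3^((2:ℝ)/3)*d) := by
              rw [← ENNReal.ofReal_mul hR, ← ENNReal.ofReal_mul (by positivity)]
              congr 1
              have h2p : (2:ℝ)^(k+1) = 2^k*2 := pow_succ _ _
              rw [h2p, hA]
              field_simp
              ring
      · rw [hT]
        simp only [if_neg hk]
        simp [lintegral_zero_measure]
    refine (ENNReal.tsum_le_tsum hper).trans ?_
    rw [tsum_eq_sum (s := Finset.range K) (fun b hb => by
      rw [if_neg (by simpa using hb)])]
    rw [Finset.sum_congr rfl (fun k hk => if_pos (Finset.mem_range.1 hk)),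
      Finset.sum_const, Finset.card_range, nsmul_eq_mul]
    rw [show ((K:ℝ≥0∞)) = ENNReal.ofReal (K:ℝ) by rw [ENNReal.ofReal_natCast],
      ← ENNReal.ofReal_mul (Nat.cast_nonneg K)]
    apply ENNReal.ofReal_le_ofReal
    have h4 : (0:ℝ) ≤ 4*R*B3^((2:ℝ)/3)*d := by positivity
    exact mul_le_mul_of_nonneg_right hKle h4
  calc _ ≤ ENNReal.ofReal (R*d) +
        ENNReal.ofReal ((2 + (Real.log 2)⁻¹) * (1 + L) * (4*R*B3^((2:ℝ)/3)*d)) :=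
        add_le_add hpiece1 hpiece2
    _ = _ := by
        rw [← ENNReal.ofReal_add (by positivity) (by positivity)]


lemma measurable_oseen : Measurable (fun w : E3 => oseen w e₃) := by
  unfold oseen
  have h1 : Measurable fun w : E3 => 1/(8*Real.pi*‖w‖) :=
    measurable_const.div (measurable_const.mul measurable_norm)
  have h2 : Measurable fun w : E3 => (⟪w, e₃⟫ / ‖w‖ ^ 2) :=
    ((continuous_id.inner continuous_const).measurable).div (measurable_norm.pow_const 2)
  exact h1.smul (measurable_const.add (h2.smul measurable_id))

lemma ofReal_norm_smul_oseen_le (ρ : E3 → ℝ) (hnn : ∀ z, 0 ≤ ρ z) (x z : E3) :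
    ENNReal.ofReal ‖ρ z • oseen (x - z) e₃‖ ≤
      ENNReal.ofReal (ρ z) * ENNReal.ofReal (1/‖x - z‖) := by
  rw [norm_smul, Real.norm_eq_abs, abs_of_nonneg (hnn z), ENNReal.ofReal_mul (hnn z)]
  exact mul_le_mul_right (ENNReal.ofReal_le_ofReal (oseen_norm_le _)) _

lemma integrable_vel (ρ : E3 → ℝ) (hm : AEMeasurable ρ volume)
    (hsm : AEStronglyMeasurable ρ volume)
    (hnn : ∀ z, 0 ≤ ρ z) {R : ℝ} (hR : 0 ≤ R)
    (hρ3 : eLpNorm ρ 3 volume ≤ ENNReal.ofReal R)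
    (hρ1 : ∫⁻ z, ENNReal.ofReal (ρ z) ≤ ENNReal.ofReal R) (x : E3) :
    Integrable (fun z => ρ z • oseen (x - z) e₃) volume := by
  constructor
  · exact hsm.smul ((measurable_oseen.comp
      (measurable_const.sub measurable_id)).aestronglyMeasurable)
  · rw [hasFiniteIntegral_iff_norm]
    have hb : ∫⁻ z, ENNReal.ofReal ‖ρ z • oseen (x - z) e₃‖ ≤
        ∫⁻ z, ENNReal.ofReal (ρ z) * ENNReal.ofReal (1/‖x - z‖) :=
      lintegral_mono (ofReal_norm_smul_oseen_le ρ hnn x)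
    refine lt_of_le_of_lt hb ?_
    rw [← lintegral_add_compl (fun z => ENNReal.ofReal (ρ z) * ENNReal.ofReal (1/‖x - z‖))
      (measurableSet_ball (x := x) (ε := 1))]
    have hball := near_field ρ hm hnn hR hρ3 x (c := 1) one_pos
    have hcompl : ∫⁻ z in (ball x 1)ᶜ,
        ENNReal.ofReal (ρ z) * ENNReal.ofReal (1/‖x - z‖) ≤ ENNReal.ofReal R := by
      have hptw : ∫⁻ z in (ball x 1)ᶜ,
          ENNReal.ofReal (ρ z) * ENNReal.ofReal (1/‖x - z‖) ≤
          ∫⁻ z in (ball x 1)ᶜ, ENNReal.ofReal (ρ z) := by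
        refine lintegral_mono_ae ((ae_restrict_mem measurableSet_ball.compl).mono
          fun z hz => ?_)
        have h1 : (1:ℝ) ≤ dist z x := not_lt.1 fun h => hz (mem_ball.2 h)
        have h2 : (1:ℝ) ≤ ‖x - z‖ := by
          rw [show ‖x - z‖ = dist z x by rw [norm_sub_rev, ← dist_eq_norm]]; exact h1
        calc ENNReal.ofReal (ρ z) * ENNReal.ofReal (1/‖x - z‖)
            ≤ ENNReal.ofReal (ρ z) * ENNReal.ofReal 1 := by
              exact mul_le_mul_right (ENNReal.ofReal_le_ofReal (by
                rw [div_le_one (by linarith)]; linarith)) _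
          _ = ENNReal.ofReal (ρ z) := by rw [ENNReal.ofReal_one, mul_one]
      exact hptw.trans ((setLIntegral_le_lintegral _ _).trans hρ1)
    exact ENNReal.add_lt_top.2 ⟨lt_of_le_of_lt hball ENNReal.ofReal_lt_top,
      lt_of_le_of_lt hcompl ENNReal.ofReal_lt_top⟩


set_option maxHeartbeats 1000000 in
/-- For nonnegative `ρ ∈ L¹ ∩ L³`, the velocity `u = U ⋆ (ρ e₃)` is log-Lipschitz:
`|u(x)−u(y)| ≤ C |x−y| (1 + ln₋|x−y|)` with `C` depending only on `‖ρ‖_{L¹∩L³}`. -/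
theorem oseenVel_logLipschitz (R : ℝ) (hR : 0 < R) :
    ∃ C : ℝ, 0 < C ∧ ∀ ρ : EuclideanSpace ℝ (Fin 3) → ℝ,
      (∀ z, 0 ≤ ρ z) → MemLp ρ 1 volume → MemLp ρ 3 volume →
      (eLpNorm ρ 1 volume).toReal + (eLpNorm ρ 3 volume).toReal ≤ R →
      ∀ x y : EuclideanSpace ℝ (Fin 3), x ≠ y →
        ‖oseenVel ρ x - oseenVel ρ y‖ ≤
          C * ‖x - y‖ * (1 + max 0 (-Real.log ‖x - y‖)) := by
  have hB := B3_nonneg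
  have hB' : (0:ℝ) ≤ B3 ^ ((2:ℝ)/3) := Real.rpow_nonneg hB _
  have hlog2 : (0:ℝ) < Real.log 2 := Real.log_pos (by norm_num)
  have hs : (0:ℝ) < (Real.log 2)⁻¹ := by positivity
  refine ⟨(2 + (Real.log 2)⁻¹) * (24 * B3 ^ ((2:ℝ)/3) + 1) * R, ?_, ?_⟩
  · apply mul_pos (mul_pos (by linarith) (by linarith)) hR
  intro ρ hnn h1 h3 hsum x y hxy
  have hR0 : (0:ℝ) ≤ R := le_trans (by positivity) hsum
  have hm : AEMeasurable ρ volume := h3.aestronglyMeasurable.aemeasurable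
  have hρ3 : eLpNorm ρ 3 volume ≤ ENNReal.ofReal R := by
    rw [← ENNReal.ofReal_toReal h3.2.ne]
    exact ENNReal.ofReal_le_ofReal
      (by linarith [ENNReal.toReal_nonneg (a := eLpNorm ρ 1 volume)])
  have hρ1' : eLpNorm ρ 1 volume ≤ ENNReal.ofReal R := by
    rw [← ENNReal.ofReal_toReal h1.2.ne]
    exact ENNReal.ofReal_le_ofReal
      (by linarith [ENNReal.toReal_nonneg (a := eLpNorm ρ 3 volume)])
  have hρ1 : ∫⁻ z, ENNReal.ofReal (ρ z) ≤ ENNReal.ofReal R := by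
    have heq : ∫⁻ z, ENNReal.ofReal (ρ z) = eLpNorm ρ 1 volume := by
      rw [eLpNorm_one_eq_lintegral_enorm]
      exact lintegral_congr fun z => (Real.enorm_eq_ofReal (hnn z)).symm
    rw [heq]; exact hρ1'
  set d := ‖x - y‖ with hd
  have hd0 : 0 < d := norm_sub_pos_iff.2 hxy
  set L := max 0 (-Real.log d) with hL
  have hL0 : (0:ℝ) ≤ L := le_max_left _ _
  -- integrability
  have hintx := integrable_vel ρ hm h3.aestronglyMeasurable hnn hR0 hρ3 hρ1 x
  have hinty := integrable_vel ρ hm h3.aestronglyMeasurable hnn hR0 hρ3 hρ1 y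
  have hdiff : oseenVel ρ x - oseenVel ρ y =
      ∫ z, (ρ z • oseen (x - z) e₃ - ρ z • oseen (y - z) e₃) := by
    rw [oseenVel, oseenVel, ← integral_sub hintx hinty]
  -- main lintegral estimate
  set F := fun z => ENNReal.ofReal ‖ρ z • oseen (x - z) e₃ - ρ z • oseen (y - z) e₃‖ with hF
  have hmain : ∫⁻ z, F z ≤
      ENNReal.ofReal ((2 + (Real.log 2)⁻¹) * (24 * B3 ^ ((2:ℝ)/3) + 1) * R * d * (1 + L)) := by
    rw [← lintegral_add_compl F (measurableSet_ball (x := x) (ε := 2*d))]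
    -- near piece
    have hnear : ∫⁻ z in ball x (2*d), F z ≤
        ENNReal.ofReal (4*R*B3^((2:ℝ)/3)*(2*d)) + ENNReal.ofReal (4*R*B3^((2:ℝ)/3)*(3*d)) := by
      have hptw : ∀ z, F z ≤ ENNReal.ofReal (ρ z) * ENNReal.ofReal (1/‖x - z‖) +
          ENNReal.ofReal (ρ z) * ENNReal.ofReal (1/‖y - z‖) := by
        intro z
        rw [hF]
        refine le_trans (ENNReal.ofReal_le_ofReal (norm_sub_le _ _)) ?_
        refine le_trans (ENNReal.ofReal_add_le) ?_
        exact add_le_add (ofReal_norm_smul_oseen_le ρ hnn x z)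
          (ofReal_norm_smul_oseen_le ρ hnn y z)
      refine le_trans (lintegral_mono hptw) ?_
      have hA : AEMeasurable (fun z => ENNReal.ofReal (ρ z) * ENNReal.ofReal (1/‖x - z‖))
          (volume.restrict (ball x (2*d))) := by
        exact (ENNReal.measurable_ofReal.comp_aemeasurable hm.restrict).mul
          ((ENNReal.measurable_ofReal.comp (measurable_const.div
            ((measurable_const.sub measurable_id).norm))).aemeasurable)
      rw [lintegral_add_left' hA]
      refine add_le_add ?_ ?_
      · exact near_field ρ hm hnn hR0 hρ3 x (by linarith)
      · have hsub2 : ball x (2*d) ⊆ ball y (3*d) := by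
          intro z hz
          have h1 : dist z x < 2*d := mem_ball.1 hz
          have h2 : dist x y = d := by rw [dist_eq_norm]
          have := dist_triangle z x y
          exact mem_ball.2 (by linarith)
        calc ∫⁻ z in ball x (2*d), ENNReal.ofReal (ρ z) * ENNReal.ofReal (1/‖y - z‖)
            ≤ ∫⁻ z in ball y (3*d), ENNReal.ofReal (ρ z) * ENNReal.ofReal (1/‖y - z‖) :=
              lintegral_mono_set hsub2
          _ ≤ _ := near_field ρ hm hnn hR0 hρ3 y (by linarith)
    -- far piece
    have hfar : ∫⁻ z in (ball x (2*d))ᶜ, F z ≤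
        ENNReal.ofReal (R*d + (2 + (Real.log 2)⁻¹) * (1 + L) * (4*R*B3^((2:ℝ)/3)*d)) := by
      have hptw : ∫⁻ z in (ball x (2*d))ᶜ, F z ≤ ∫⁻ z in (ball x (2*d))ᶜ,
          ENNReal.ofReal (ρ z) * ENNReal.ofReal (d/‖x - z‖^2) := by
        refine lintegral_mono_ae ((ae_restrict_mem measurableSet_ball.compl).mono
          fun z hz => ?_)
        have h1 : 2*d ≤ dist z x := not_lt.1 fun h => hz (mem_ball.2 h)
        have h2 : 2*d ≤ ‖x - z‖ := by
          rw [show ‖x - z‖ = dist z x by rw [norm_sub_rev, ← dist_eq_norm]]; exact h1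
        have hker : ‖oseen (x - z) e₃ - oseen (y - z) e₃‖ ≤ d/‖x - z‖^2 := by
          have hdd : ‖(x - z) - (y - z)‖ = d := by rw [sub_sub_sub_cancel_right]
          have := oseen_diff_le (x - z) (y - z) (by rw [hdd]; linarith)
          rwa [hdd] at this
        show ENNReal.ofReal ‖ρ z • oseen (x - z) e₃ - ρ z • oseen (y - z) e₃‖ ≤
          ENNReal.ofReal (ρ z) * ENNReal.ofReal (d/‖x - z‖^2)
        have heq : ρ z • oseen (x - z) e₃ - ρ z • oseen (y - z) e₃ =
            ρ z • (oseen (x - z) e₃ - oseen (y - z) e₃) := (smul_sub _ _ _).symm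
        rw [heq, norm_smul, Real.norm_eq_abs, abs_of_nonneg (hnn z),
          ENNReal.ofReal_mul (hnn z)]
        exact mul_le_mul_right (ENNReal.ofReal_le_ofReal hker) _
      exact hptw.trans (far_field ρ hm hnn hR0 hρ3 hρ1 x hd0)
    refine le_trans (add_le_add hnear hfar) ?_
    have hn1 : (0:ℝ) ≤ 4*R*B3^((2:ℝ)/3)*(2*d) := by
      apply mul_nonneg (mul_nonneg (mul_nonneg (by norm_num) hR0) hB'); linarith
    have hn2 : (0:ℝ) ≤ 4*R*B3^((2:ℝ)/3)*(3*d) := by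
      apply mul_nonneg (mul_nonneg (mul_nonneg (by norm_num) hR0) hB'); linarith
    have hn3 : (0:ℝ) ≤ R*d + (2 + (Real.log 2)⁻¹) * (1 + L) * (4*R*B3^((2:ℝ)/3)*d) := by
      have : (0:ℝ) ≤ 4*R*B3^((2:ℝ)/3)*d :=
        mul_nonneg (mul_nonneg (mul_nonneg (by norm_num) hR0) hB') hd0.le
      have h2L : (0:ℝ) ≤ (2 + (Real.log 2)⁻¹) * (1 + L) := by nlinarith
      nlinarith [mul_nonneg hR0 hd0.le, mul_nonneg h2L this]
    rw [← ENNReal.ofReal_add hn1 hn2, ← ENNReal.ofReal_add (by linarith) hn3]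
    apply ENNReal.ofReal_le_ofReal
    -- final real arithmetic
    set B' := B3 ^ ((2:ℝ)/3) with hB'def
    set s := (Real.log 2)⁻¹ with hsdef
    have key : (2:ℝ) ≤ (2 + s) * (1 + L) := by nlinarith
    have hRd : (0:ℝ) ≤ R*d := mul_nonneg hR0 hd0.le
    have h20 : (0:ℝ) ≤ (20*B'+1)*(R*d) := mul_nonneg (by linarith) hRd
    have cert : (2 + s) * (24*B'+1) * R * d * (1 + L) -
        (4*R*B'*(2*d) + 4*R*B'*(3*d) + (R*d + (2 + s) * (1 + L) * (4*R*B'*d))) =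
        ((2 + s) * (1 + L) - 1) * ((20*B'+1)*(R*d)) := by ring
    nlinarith [mul_nonneg (by linarith : (0:ℝ) ≤ (2 + s) * (1 + L) - 1) h20]
  -- conclude
  rw [hdiff]
  refine le_trans (norm_integral_le_lintegral_norm _) ?_
  refine ENNReal.toReal_le_of_le_ofReal ?_ ?_
  · have h2L : (0:ℝ) ≤ (2 + (Real.log 2)⁻¹) * (24 * B3 ^ ((2:ℝ)/3) + 1) * R :=
      mul_nonneg (mul_nonneg (by linarith) (by linarith)) hR0
    have : (0:ℝ) ≤ d * (1 + L) := mul_nonneg hd0.le (by linarith)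
    nlinarith
  · have : (2 + (Real.log 2)⁻¹) * (24 * B3 ^ ((2:ℝ)/3) + 1) * R * d * (1 + L) =
        (2 + (Real.log 2)⁻¹) * (24 * B3 ^ ((2:ℝ)/3) + 1) * R * d * (1 + L) := rfl
    exact hmain
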